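/- Under the hypotheses −n < α < n(p−1), 1 < p < α + γ, max{0, (n−p)/(α+γ−p)} < a < p(n−1)/(α+γ−p), if in addition 1 < s < (n−1)p/(a(α+γ−p)+p+1), then ∫_{Ω_n} ( ‖Dφ_a(x)‖^p / ( a·x_n^{aγ−n} · |φ_a(x)|^α ) )^{s/(p−s)} dx ≤ ( ( Σ_{i=1}^{n-1} (aγ_i − 1)^2 + n − 1 + a^2 )^{p/2} / (a·c_a) )^{s/(p−s)}, where c_a = min{1, n^{α/2}}. -/

import Mathlib

open MeasureTheory Real Finset
open scoped ENNReal BigOperators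

noncomputable section

/-- The model Lipschitz domain `Ω_n` (dimension `n+1`): `0 < x_last < 1` and
`0 < x_i < x_last` for the first `n` coordinates. -/
def OmegaModel (n : ℕ) : Set (EuclideanSpace ℝ (Fin (n + 1))) :=
  {x | 0 < x (Fin.last n) ∧ x (Fin.last n) < 1 ∧
    ∀ i : Fin n, 0 < x i.castSucc ∧ x i.castSucc < x (Fin.last n)}

/-- The outward cuspidal domain `Ω_γ` (dimension `n+1`) with Hölder exponents `γi`. -/
def OmegaGamma (n : ℕ) (γi : Fin n → ℝ) : Set (EuclideanSpace ℝ (Fin (n + 1))) :=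
  {x | 0 < x (Fin.last n) ∧ x (Fin.last n) < 1 ∧
    ∀ i : Fin n, 0 < x i.castSucc ∧ x i.castSucc < x (Fin.last n) ^ γi i}

/-- The cusp map `φ_a(x) = (x_1 x_last^{aγ_1-1}, …, x_n x_last^{aγ_n-1}, x_last^a)`. -/
def phiMap (n : ℕ) (γi : Fin n → ℝ) (a : ℝ)
    (x : EuclideanSpace ℝ (Fin (n + 1))) : EuclideanSpace ℝ (Fin (n + 1)) :=
  WithLp.toLp 2 (fun j => Fin.lastCases (x (Fin.last n) ^ a)
    (fun i => x i.castSucc * x (Fin.last n) ^ (a * γi i - 1)) j)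

/-! ### Auxiliary lemmas -/

open ContinuousLinearMap in
/-- Coordinatewise characterization of `HasFDerivAt` for Euclidean-space valued maps. -/
theorem hasFDerivAt_euclidean {ι : Type*} [Fintype ι] {H : Type*} [NormedAddCommGroup H]
    [NormedSpace ℝ H] {f : H → EuclideanSpace ℝ ι} {f' : H →L[ℝ] EuclideanSpace ℝ ι} {y : H} :
    HasFDerivAt f f' y ↔
      ∀ i, HasFDerivAt (fun x => f x i) (PiLp.proj 2 (fun _ : ι => ℝ) i ∘L f') y := by
  rw [← (PiLp.continuousLinearEquiv 2 ℝ _).comp_hasFDerivAt_iff, hasFDerivAt_pi']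
  rfl

open ContinuousLinearMap in
/-- The total derivative of the cusp map. -/
def dPhi (n : ℕ) (γi : Fin n → ℝ) (a : ℝ) (x : EuclideanSpace ℝ (Fin (n + 1))) :
    EuclideanSpace ℝ (Fin (n + 1)) →L[ℝ] EuclideanSpace ℝ (Fin (n + 1)) :=
  (PiLp.continuousLinearEquiv 2 ℝ (fun _ : Fin (n+1) => ℝ)).symm.toContinuousLinearMap ∘L
    ContinuousLinearMap.pi (fun j => Fin.lastCases
      ((a * x (Fin.last n) ^ (a - 1)) • EuclideanSpace.proj (Fin.last n))
      (fun i => (x i.castSucc) • (((a * γi i - 1) * x (Fin.last n) ^ (a * γi i - 1 - 1)) •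
          EuclideanSpace.proj (𝕜 := ℝ) (Fin.last n)) +
        (x (Fin.last n) ^ (a * γi i - 1)) • EuclideanSpace.proj i.castSucc) j)

theorem hasFDerivAt_phiMap (n : ℕ) (γi : Fin n → ℝ) (a : ℝ)
    (x : EuclideanSpace ℝ (Fin (n + 1))) (hx : 0 < x (Fin.last n)) :
    HasFDerivAt (phiMap n γi a) (dPhi n γi a x) x := by
  rw [hasFDerivAt_euclidean]
  intro j
  have hlastEval := PiLp.hasFDerivAt_apply (𝕜 := ℝ) 2 x (Fin.last n)
  induction j using Fin.lastCases with
  | last =>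
    have h2 := (hasDerivAt_rpow_const (p := a) (Or.inl hx.ne')).comp_hasFDerivAt x hlastEval
    have heq : (fun y : EuclideanSpace ℝ (Fin (n+1)) => phiMap n γi a y (Fin.last n))
        = fun y : EuclideanSpace ℝ (Fin (n+1)) => y (Fin.last n) ^ a := by
      funext y; simp [phiMap]
    rw [heq]
    refine h2.congr_fderiv ?_
    ext v
    simp [dPhi]
  | cast i =>
    have hiEval := PiLp.hasFDerivAt_apply (𝕜 := ℝ) 2 x i.castSucc
    have h2 := (hasDerivAt_rpow_const (p := a * γi i - 1)
      (Or.inl hx.ne')).comp_hasFDerivAt x hlastEval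
    have h3 := hiEval.mul h2
    have heq : (fun y : EuclideanSpace ℝ (Fin (n+1)) => phiMap n γi a y i.castSucc)
        = fun y : EuclideanSpace ℝ (Fin (n+1)) =>
            y i.castSucc * ((fun t : ℝ => t ^ (a * γi i - 1)) ∘
              fun y : EuclideanSpace ℝ (Fin (n+1)) => y (Fin.last n)) y := by
      funext y; simp [phiMap]
    rw [heq]
    refine h3.congr_fderiv ?_
    ext v
    simp [dPhi]

theorem dPhi_apply_last (n : ℕ) (γi : Fin n → ℝ) (a : ℝ) (x v : EuclideanSpace ℝ (Fin (n + 1))) :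
    dPhi n γi a x v (Fin.last n) = a * x (Fin.last n) ^ (a - 1) * v (Fin.last n) := by
  simp [dPhi]

theorem dPhi_apply_cast (n : ℕ) (γi : Fin n → ℝ) (a : ℝ) (i : Fin n)
    (x v : EuclideanSpace ℝ (Fin (n + 1))) :
    dPhi n γi a x v i.castSucc =
      x i.castSucc * ((a * γi i - 1) * x (Fin.last n) ^ (a * γi i - 1 - 1) * v (Fin.last n))
        + x (Fin.last n) ^ (a * γi i - 1) * v i.castSucc := by
  simp [dPhi]

theorem norm_sq_eq_sum (n : ℕ) (v : EuclideanSpace ℝ (Fin n)) :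
    ‖v‖ ^ 2 = ∑ j, (v j) ^ 2 := by
  rw [EuclideanSpace.norm_eq, Real.sq_sqrt (by positivity)]
  simp [Real.norm_eq_abs, sq_abs]

theorem pair_sq_le (n : ℕ) (v : EuclideanSpace ℝ (Fin n)) (j k : Fin n) (hjk : j ≠ k) :
    (v j) ^ 2 + (v k) ^ 2 ≤ ‖v‖ ^ 2 := by
  rw [norm_sq_eq_sum]
  have := Finset.sum_le_sum_of_subset_of_nonneg (f := fun j => (v j)^2)
    (Finset.subset_univ {j, k}) (fun i _ _ => sq_nonneg _)
  rwa [Finset.sum_pair hjk] at this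

theorem single_sq_le (n : ℕ) (v : EuclideanSpace ℝ (Fin n)) (j : Fin n) :
    (v j) ^ 2 ≤ ‖v‖ ^ 2 := by
  rw [norm_sq_eq_sum]
  exact Finset.single_le_sum (f := fun j => (v j)^2) (fun i _ => sq_nonneg _) (Finset.mem_univ j)

open ContinuousLinearMap in
theorem norm_dPhi_le (n : ℕ) (γi : Fin n → ℝ) (hγi : ∀ i, 1 ≤ γi i) (a : ℝ) (ha : 0 < a)
    (x : EuclideanSpace ℝ (Fin (n + 1))) (hx0 : 0 < x (Fin.last n)) (hx1 : x (Fin.last n) < 1)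
    (hxi : ∀ i : Fin n, 0 < x i.castSucc ∧ x i.castSucc < x (Fin.last n)) :
    ‖dPhi n γi a x‖ ≤
      Real.sqrt ((∑ i, (a * γi i - 1) ^ 2) + n + a ^ 2) * x (Fin.last n) ^ (a - 1) := by
  set t := x (Fin.last n) with ht_def
  set τ := t ^ (a - 1) with hτ_def
  have hτ : 0 < τ := Real.rpow_pos_of_pos hx0 _
  set C0 := (∑ i, (a * γi i - 1) ^ 2) + (n : ℝ) + a ^ 2 with hC0_def
  have hC0 : 0 ≤ C0 := by
    have h1 : 0 ≤ ∑ i, (a * γi i - 1) ^ 2 := Finset.sum_nonneg fun i _ => sq_nonneg _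
    positivity
  refine opNorm_le_bound _ (by positivity) fun v => ?_
  have hsum : ∑ j, ‖dPhi n γi a x v j‖ ^ 2 ≤ C0 * (τ * ‖v‖) ^ 2 := by
    rw [Fin.sum_univ_castSucc]
    have hlast : ‖dPhi n γi a x v (Fin.last n)‖ ^ 2 ≤ a ^ 2 * τ ^ 2 * ‖v‖ ^ 2 := by
      rw [dPhi_apply_last, Real.norm_eq_abs, sq_abs, mul_pow, mul_pow]
      exact mul_le_mul_of_nonneg_left (single_sq_le (n+1) v (Fin.last n)) (by positivity)
    have hcast : ∀ i : Fin n, ‖dPhi n γi a x v i.castSucc‖ ^ 2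
        ≤ (1 + (a * γi i - 1) ^ 2) * τ ^ 2 * ‖v‖ ^ 2 := by
      intro i
      rw [dPhi_apply_cast, Real.norm_eq_abs, sq_abs]
      set c1 := t ^ (a * γi i - 1) with hc1_def
      set c2 := x i.castSucc * ((a * γi i - 1) * t ^ (a * γi i - 1 - 1)) with hc2_def
      have hc1 : 0 ≤ c1 := Real.rpow_nonneg hx0.le _
      have hc1τ : c1 ≤ τ := by
        apply Real.rpow_le_rpow_of_exponent_ge hx0 hx1.le
        nlinarith [hγi i]
      have hc2' : x i.castSucc * t ^ (a * γi i - 1 - 1) ≤ τ := by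
        have h1 : x i.castSucc * t ^ (a * γi i - 1 - 1) ≤ t * t ^ (a * γi i - 1 - 1) :=
          mul_le_mul_of_nonneg_right (hxi i).2.le (Real.rpow_nonneg hx0.le _)
        have h2 : t * t ^ (a * γi i - 1 - 1) = t ^ (a * γi i - 1) := by
          nth_rewrite 1 [← Real.rpow_one t]
          rw [← Real.rpow_add hx0]
          ring_nf
        calc x i.castSucc * t ^ (a * γi i - 1 - 1) ≤ t ^ (a * γi i - 1) := h2 ▸ h1
          _ ≤ τ := hc1τ
      have hc2'nonneg : 0 ≤ x i.castSucc * t ^ (a * γi i - 1 - 1) :=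
        mul_nonneg (hxi i).1.le (Real.rpow_nonneg hx0.le _)
      have hc2sq : c2 ^ 2 ≤ (a * γi i - 1) ^ 2 * τ ^ 2 := by
        have : c2 = (a * γi i - 1) * (x i.castSucc * t ^ (a * γi i - 1 - 1)) := by
          rw [hc2_def]; ring
        rw [this, mul_pow]
        exact mul_le_mul_of_nonneg_left (pow_le_pow_left₀ hc2'nonneg hc2' 2) (sq_nonneg _)
      have hpair := pair_sq_le (n+1) v i.castSucc (Fin.last n)
        (Fin.ne_of_lt (Fin.castSucc_lt_last i))
      have hrow : (c2 * v (Fin.last n) + c1 * v i.castSucc) ^ 2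
          ≤ (c1 ^ 2 + c2 ^ 2) * ((v i.castSucc) ^ 2 + (v (Fin.last n)) ^ 2) := by
        nlinarith [sq_nonneg (c1 * v (Fin.last n) - c2 * v i.castSucc)]
      have heq : x i.castSucc * ((a * γi i - 1) * t ^ (a * γi i - 1 - 1) * v (Fin.last n))
          + t ^ (a * γi i - 1) * v i.castSucc
          = c2 * v (Fin.last n) + c1 * v i.castSucc := by
        rw [hc1_def, hc2_def]; ring
      rw [heq]
      have hc1sq : c1 ^ 2 ≤ τ ^ 2 := pow_le_pow_left₀ hc1 hc1τ 2
      have hvv : (v i.castSucc) ^ 2 + (v (Fin.last n)) ^ 2 ≤ ‖v‖ ^ 2 := hpair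
      have h0 : (0:ℝ) ≤ (v i.castSucc) ^ 2 + (v (Fin.last n)) ^ 2 := by positivity
      calc (c2 * v (Fin.last n) + c1 * v i.castSucc) ^ 2
          ≤ (c1 ^ 2 + c2 ^ 2) * ((v i.castSucc) ^ 2 + (v (Fin.last n)) ^ 2) := hrow
        _ ≤ (τ ^ 2 + (a * γi i - 1) ^ 2 * τ ^ 2) * ‖v‖ ^ 2 :=
            mul_le_mul (add_le_add hc1sq hc2sq) hvv h0 (by positivity)
        _ = (1 + (a * γi i - 1) ^ 2) * τ ^ 2 * ‖v‖ ^ 2 := by ring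
    calc (∑ i : Fin n, ‖dPhi n γi a x v i.castSucc‖ ^ 2) + ‖dPhi n γi a x v (Fin.last n)‖ ^ 2
        ≤ (∑ i : Fin n, (1 + (a * γi i - 1) ^ 2) * τ ^ 2 * ‖v‖ ^ 2)
            + a ^ 2 * τ ^ 2 * ‖v‖ ^ 2 :=
          add_le_add (Finset.sum_le_sum fun i _ => hcast i) hlast
      _ = C0 * (τ * ‖v‖) ^ 2 := by
          have hs : (∑ i : Fin n, (1 + (a * γi i - 1) ^ 2) * τ ^ 2 * ‖v‖ ^ 2)
              = ((n : ℝ) + ∑ i, (a * γi i - 1) ^ 2) * (τ ^ 2 * ‖v‖ ^ 2) := by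
            simp_rw [mul_assoc]
            rw [← Finset.sum_mul, Finset.sum_add_distrib, Finset.sum_const, Finset.card_univ,
              Fintype.card_fin, nsmul_eq_mul, mul_one]
          rw [hs, hC0_def]
          ring
  calc ‖dPhi n γi a x v‖ = Real.sqrt (∑ j, ‖dPhi n γi a x v j‖ ^ 2) := EuclideanSpace.norm_eq _
    _ ≤ Real.sqrt (C0 * (τ * ‖v‖) ^ 2) := Real.sqrt_le_sqrt hsum
    _ = Real.sqrt C0 * (τ * ‖v‖) := by
        rw [Real.sqrt_mul hC0, Real.sqrt_sq (by positivity)]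
    _ = Real.sqrt C0 * τ * ‖v‖ := by ring

theorem phiMap_last (n : ℕ) (γi : Fin n → ℝ) (a : ℝ) (x : EuclideanSpace ℝ (Fin (n + 1))) :
    phiMap n γi a x (Fin.last n) = x (Fin.last n) ^ a := by simp [phiMap]

theorem phiMap_cast (n : ℕ) (γi : Fin n → ℝ) (a : ℝ) (i : Fin n)
    (x : EuclideanSpace ℝ (Fin (n + 1))) :
    phiMap n γi a x i.castSucc = x i.castSucc * x (Fin.last n) ^ (a * γi i - 1) := by
  simp [phiMap]

theorem norm_phiMap_lower (n : ℕ) (γi : Fin n → ℝ) (a : ℝ)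
    (x : EuclideanSpace ℝ (Fin (n + 1))) (hx0 : 0 < x (Fin.last n)) :
    x (Fin.last n) ^ a ≤ ‖phiMap n γi a x‖ := by
  have h1 : (phiMap n γi a x (Fin.last n)) ^ 2 ≤ ‖phiMap n γi a x‖ ^ 2 :=
    single_sq_le (n+1) _ (Fin.last n)
  rw [phiMap_last] at h1
  have h2 : 0 ≤ x (Fin.last n) ^ a := Real.rpow_nonneg hx0.le _
  nlinarith [norm_nonneg (phiMap n γi a x)]

theorem norm_phiMap_upper (n : ℕ) (γi : Fin n → ℝ) (hγi : ∀ i, 1 ≤ γi i) (a : ℝ) (ha : 0 < a)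
    (x : EuclideanSpace ℝ (Fin (n + 1))) (hx0 : 0 < x (Fin.last n)) (hx1 : x (Fin.last n) < 1)
    (hxi : ∀ i : Fin n, 0 < x i.castSucc ∧ x i.castSucc < x (Fin.last n)) :
    ‖phiMap n γi a x‖ ≤ Real.sqrt (n + 1) * x (Fin.last n) ^ a := by
  set t := x (Fin.last n) with ht_def
  have hta : 0 < t ^ a := Real.rpow_pos_of_pos hx0 _
  have hbound : ∀ j, (phiMap n γi a x j) ^ 2 ≤ (t ^ a) ^ 2 := by
    intro j
    induction j using Fin.lastCases with
    | last =>
      rw [phiMap_last]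
    | cast i =>
      rw [phiMap_cast]
      have h1 : 0 ≤ x i.castSucc * t ^ (a * γi i - 1) :=
        mul_nonneg (hxi i).1.le (Real.rpow_nonneg hx0.le _)
      have h2 : x i.castSucc * t ^ (a * γi i - 1) ≤ t ^ a := by
        have h3 : x i.castSucc * t ^ (a * γi i - 1) ≤ t * t ^ (a * γi i - 1) :=
          mul_le_mul_of_nonneg_right (hxi i).2.le (Real.rpow_nonneg hx0.le _)
        have h4 : t * t ^ (a * γi i - 1) = t ^ (a * γi i) := by
          nth_rewrite 1 [← Real.rpow_one t]
          rw [← Real.rpow_add hx0]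
          ring_nf
        have h5 : t ^ (a * γi i) ≤ t ^ a := by
          apply Real.rpow_le_rpow_of_exponent_ge hx0 hx1.le
          nlinarith [hγi i]
        calc x i.castSucc * t ^ (a * γi i - 1) ≤ t ^ (a * γi i) := h4 ▸ h3
          _ ≤ t ^ a := h5
      exact pow_le_pow_left₀ h1 h2 2
  have hsum : ∑ j, ‖phiMap n γi a x j‖ ^ 2 ≤ (n + 1 : ℝ) * (t ^ a) ^ 2 := by
    calc ∑ j, ‖phiMap n γi a x j‖ ^ 2 ≤ ∑ _j : Fin (n+1), (t ^ a) ^ 2 := by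
          refine Finset.sum_le_sum fun j _ => ?_
          rw [Real.norm_eq_abs, sq_abs]
          exact hbound j
      _ = (n + 1 : ℝ) * (t ^ a) ^ 2 := by
          rw [Finset.sum_const, Finset.card_univ, Fintype.card_fin, nsmul_eq_mul]
          push_cast
          ring
  calc ‖phiMap n γi a x‖ = Real.sqrt (∑ j, ‖phiMap n γi a x j‖ ^ 2) :=
        EuclideanSpace.norm_eq _
    _ ≤ Real.sqrt ((n + 1 : ℝ) * (t ^ a) ^ 2) := Real.sqrt_le_sqrt hsum
    _ = Real.sqrt (n + 1) * t ^ a := by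
        rw [Real.sqrt_mul (by positivity), Real.sqrt_sq hta.le]

/-- The weighted volume integral over the model domain is at most `1`
when the exponent `r` satisfies `r + n ≥ 0`. -/
theorem omega_lintegral_le (n : ℕ) (r : ℝ) (hr : 0 ≤ r + n) :
    ∫⁻ x in OmegaModel n, ENNReal.ofReal ((x (Fin.last n)) ^ r) ≤ 1 := by
  classical
  set e := (MeasurableEquiv.toLp 2 (Fin (n+1) → ℝ)).symm with he_def
  have he : MeasurePreserving (⇑e.symm) volume volume :=
    (EuclideanSpace.volume_preserving_symm_measurableEquiv_toLp (Fin (n+1))).symm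
  have h1 : ∫⁻ x in OmegaModel n, ENNReal.ofReal ((x (Fin.last n)) ^ r)
      = ∫⁻ y in (⇑e.symm) ⁻¹' (OmegaModel n),
          ENNReal.ofReal ((y (Fin.last n)) ^ r) ∂(volume : Measure (Fin (n+1) → ℝ)) :=
    (he.setLIntegral_comp_preimage_emb e.symm.measurableEmbedding
      (f := fun x : EuclideanSpace ℝ (Fin (n+1)) => ENNReal.ofReal ((x (Fin.last n)) ^ r))
      (s := OmegaModel n)).symm
  set m := MeasurableEquiv.piFinSuccAbove (fun _ : Fin (n+1) => ℝ) (Fin.last n) with hm_def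
  have hm : MeasurePreserving (⇑m.symm)
      ((volume : Measure ℝ).prod (volume : Measure (Fin n → ℝ))) volume :=
    (measurePreserving_piFinSuccAbove (fun _ : Fin (n+1) => (volume : Measure ℝ))
      (Fin.last n)).symm
  have h2 : ∫⁻ y in (⇑e.symm) ⁻¹' (OmegaModel n),
          ENNReal.ofReal ((y (Fin.last n)) ^ r) ∂(volume : Measure (Fin (n+1) → ℝ))
      = ∫⁻ p in (⇑m.symm) ⁻¹' ((⇑e.symm) ⁻¹' (OmegaModel n)),
          ENNReal.ofReal (((m.symm p) (Fin.last n)) ^ r)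
          ∂((volume : Measure ℝ).prod (volume : Measure (Fin n → ℝ))) :=
    (hm.setLIntegral_comp_preimage_emb m.symm.measurableEmbedding
      (f := fun y : Fin (n+1) → ℝ => ENNReal.ofReal ((y (Fin.last n)) ^ r))
      (s := (⇑e.symm) ⁻¹' (OmegaModel n))).symm
  have hval : ∀ p : ℝ × (Fin n → ℝ), (m.symm p) (Fin.last n) = p.1 := by
    intro p
    simp [hm_def, MeasurableEquiv.piFinSuccAbove_symm_apply]
  have hset : (⇑m.symm) ⁻¹' ((⇑e.symm) ⁻¹' (OmegaModel n))
      = {p : ℝ × (Fin n → ℝ) | (0 < p.1 ∧ p.1 < 1) ∧ ∀ i, 0 < p.2 i ∧ p.2 i < p.1} := by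
    ext p
    have hcast : ∀ i : Fin n, (m.symm p) (Fin.castSucc i) = p.2 i := by
      intro i
      simp [hm_def, MeasurableEquiv.piFinSuccAbove_symm_apply, Fin.succAbove_last,
        Fin.snoc_castSucc]
    have hOm : (e.symm (m.symm p) ∈ OmegaModel n) ↔
        (0 < (m.symm p) (Fin.last n) ∧ (m.symm p) (Fin.last n) < 1 ∧
          ∀ i : Fin n, 0 < (m.symm p) i.castSucc ∧
            (m.symm p) i.castSucc < (m.symm p) (Fin.last n)) := Iff.rfl
    simp only [Set.mem_preimage, Set.mem_setOf_eq, hOm, hval, hcast]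
    tauto
  set S : Set (ℝ × (Fin n → ℝ)) :=
    {p : ℝ × (Fin n → ℝ) | (0 < p.1 ∧ p.1 < 1) ∧ ∀ i, 0 < p.2 i ∧ p.2 i < p.1} with hS_def
  have hS : MeasurableSet S := by
    have : S = ({p : ℝ × (Fin n → ℝ) | 0 < p.1} ∩ {p | p.1 < 1}) ∩
        ⋂ i : Fin n, ({p : ℝ × (Fin n → ℝ) | 0 < p.2 i} ∩ {p | p.2 i < p.1}) := by
      ext p; simp [hS_def, forall_and]
    rw [this]
    refine MeasurableSet.inter (MeasurableSet.inter ?_ ?_)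
      (MeasurableSet.iInter fun i => .inter ?_ ?_)
    · exact measurableSet_lt measurable_const measurable_fst
    · exact measurableSet_lt measurable_fst measurable_const
    · exact measurableSet_lt measurable_const measurable_snd.eval
    · exact measurableSet_lt measurable_snd.eval measurable_fst
  have key : ∫⁻ p in S, ENNReal.ofReal (p.1 ^ r)
      ∂((volume : Measure ℝ).prod (volume : Measure (Fin n → ℝ))) ≤ 1 := by
    have hgm : Measurable (fun p : ℝ × (Fin n → ℝ) => ENNReal.ofReal (p.1 ^ r)) :=
      (measurable_fst.pow measurable_const).ennreal_ofReal
    rw [← lintegral_indicator hS _, lintegral_prod _ ((hgm.indicator hS).aemeasurable)]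
    have inner_eq : ∀ t : ℝ,
        (∫⁻ z, S.indicator (fun p : ℝ × (Fin n → ℝ) => ENNReal.ofReal (p.1 ^ r)) (t, z)
            ∂(volume : Measure (Fin n → ℝ)))
          = (Set.Ioo (0:ℝ) 1).indicator
              (fun t => ENNReal.ofReal (t ^ r) * ENNReal.ofReal t ^ n) t := by
      intro t
      by_cases ht : t ∈ Set.Ioo (0:ℝ) 1
      · rw [Set.indicator_of_mem ht]
        have hfz : (fun z : Fin n → ℝ =>
            S.indicator (fun p : ℝ × (Fin n → ℝ) => ENNReal.ofReal (p.1 ^ r)) (t, z))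
            = (Set.univ.pi fun _ : Fin n => Set.Ioo (0:ℝ) t).indicator
                (fun _ => ENNReal.ofReal (t ^ r)) := by
          funext z
          by_cases hz : z ∈ Set.univ.pi fun _ : Fin n => Set.Ioo (0:ℝ) t
          · rw [Set.indicator_of_mem hz]
            refine Set.indicator_of_mem ?_ _
            refine ⟨⟨ht.1, ht.2⟩, fun i => ?_⟩
            have := hz i (Set.mem_univ i)
            exact ⟨this.1, this.2⟩
          · rw [Set.indicator_of_notMem hz]
            refine Set.indicator_of_notMem ?_ _
            intro hmem
            exact hz (fun i _ => ⟨(hmem.2 i).1, (hmem.2 i).2⟩)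
        rw [hfz, lintegral_indicator_const (MeasurableSet.univ_pi fun _ => measurableSet_Ioo)]
        congr 1
        rw [volume_pi_pi]
        simp [Real.volume_Ioo]
      · rw [Set.indicator_of_notMem ht]
        have hfz : (fun z : Fin n → ℝ =>
            S.indicator (fun p : ℝ × (Fin n → ℝ) => ENNReal.ofReal (p.1 ^ r)) (t, z))
            = fun _ => 0 := by
          funext z
          refine Set.indicator_of_notMem ?_ _
          intro hmem
          exact ht ⟨hmem.1.1, hmem.1.2⟩
        simp [hfz]
    calc ∫⁻ t, (∫⁻ z, S.indicator (fun p : ℝ × (Fin n → ℝ) => ENNReal.ofReal (p.1 ^ r)) (t, z)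
            ∂(volume : Measure (Fin n → ℝ))) ∂(volume : Measure ℝ)
        = ∫⁻ t, (Set.Ioo (0:ℝ) 1).indicator
            (fun t => ENNReal.ofReal (t ^ r) * ENNReal.ofReal t ^ n) t ∂(volume : Measure ℝ) := by
          simp_rw [inner_eq]
      _ = ∫⁻ t in Set.Ioo (0:ℝ) 1,
            ENNReal.ofReal (t ^ r) * ENNReal.ofReal t ^ n ∂(volume : Measure ℝ) := by
          rw [lintegral_indicator measurableSet_Ioo _]
      _ ≤ ∫⁻ _ in Set.Ioo (0:ℝ) 1, 1 ∂(volume : Measure ℝ) := by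
          refine setLIntegral_mono measurable_const fun t ht => ?_
          have ht0 : 0 < t := ht.1
          have ht1 : t < 1 := ht.2
          rw [← ENNReal.ofReal_pow ht0.le, ← ENNReal.ofReal_mul (Real.rpow_nonneg ht0.le _)]
          have hmul : t ^ r * t ^ n = t ^ (r + n) := by
            rw [← Real.rpow_natCast t n, ← Real.rpow_add ht0]
          rw [hmul]
          calc ENNReal.ofReal (t ^ (r + n)) ≤ ENNReal.ofReal 1 :=
                ENNReal.ofReal_le_ofReal (Real.rpow_le_one ht0.le ht1.le hr)
            _ = 1 := ENNReal.ofReal_one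
      _ = 1 := by simp [Real.volume_Ioo]
  rw [h1, h2]
  simp_rw [hval]
  rw [hset]
  exact key

/-- Pointwise bound for the integrand over the model domain. -/
theorem pointwise_bound (n : ℕ) (γi : Fin n → ℝ) (hγi : ∀ i, 1 ≤ γi i) (γ α p a q : ℝ)
    (ha : 0 < a) (hp : 0 ≤ p) (hq : 0 ≤ q)
    (x : EuclideanSpace ℝ (Fin (n + 1))) (hx : x ∈ OmegaModel n) :
    (‖fderiv ℝ (phiMap n γi a) x‖ ^ p /
        (a * x (Fin.last n) ^ (a * γ - (n + 1 : ℝ)) * ‖phiMap n γi a x‖ ^ α)) ^ q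
      ≤ (((∑ i, (a * γi i - 1) ^ 2) + n + a ^ 2) ^ (p / 2) /
            (a * min 1 ((n + 1 : ℝ) ^ (α / 2)))) ^ q
        * x (Fin.last n) ^ (((a - 1) * p - (a * γ - (n + 1 : ℝ) + a * α)) * q) := by
  obtain ⟨hx0, hx1, hxi⟩ := hx
  set T := x (Fin.last n) with hT_def
  have hT0 : 0 < T := hx0
  have hsum0 : (0:ℝ) ≤ ∑ i, (a * γi i - 1) ^ 2 := Finset.sum_nonneg fun i _ => sq_nonneg _
  have hC0 : (0:ℝ) < (∑ i, (a * γi i - 1) ^ 2) + n + a ^ 2 := by positivity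
  have hca : (0:ℝ) < min 1 ((n + 1 : ℝ) ^ (α / 2)) :=
    lt_min one_pos (Real.rpow_pos_of_pos (by positivity) _)
  have hφpos : 0 < ‖phiMap n γi a x‖ :=
    lt_of_lt_of_le (Real.rpow_pos_of_pos hT0 a) (norm_phiMap_lower n γi a x hx0)
  -- numerator bound
  have hDle : ‖fderiv ℝ (phiMap n γi a) x‖
      ≤ Real.sqrt ((∑ i, (a * γi i - 1) ^ 2) + n + a ^ 2) * T ^ (a - 1) := by
    rw [(hasFDerivAt_phiMap n γi a x hx0).fderiv]
    exact norm_dPhi_le n γi hγi a ha x hx0 hx1 hxi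
  have hnum : ‖fderiv ℝ (phiMap n γi a) x‖ ^ p
      ≤ ((∑ i, (a * γi i - 1) ^ 2) + n + a ^ 2) ^ (p / 2) * T ^ ((a - 1) * p) := by
    have h1 : ‖fderiv ℝ (phiMap n γi a) x‖ ^ p
        ≤ (Real.sqrt ((∑ i, (a * γi i - 1) ^ 2) + n + a ^ 2) * T ^ (a - 1)) ^ p :=
      Real.rpow_le_rpow (norm_nonneg _) hDle hp
    have h2 : (Real.sqrt ((∑ i, (a * γi i - 1) ^ 2) + n + a ^ 2) * T ^ (a - 1)) ^ p
        = ((∑ i, (a * γi i - 1) ^ 2) + n + a ^ 2) ^ (p / 2) * T ^ ((a - 1) * p) := by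
      rw [Real.mul_rpow (Real.sqrt_nonneg _) (Real.rpow_nonneg hT0.le _),
        Real.sqrt_eq_rpow, ← Real.rpow_mul hC0.le, ← Real.rpow_mul hT0.le,
        show 1 / 2 * p = p / 2 by ring]
    exact h1.trans_eq h2
  -- denominator bound
  have hφα : min 1 ((n + 1 : ℝ) ^ (α / 2)) * T ^ (a * α) ≤ ‖phiMap n γi a x‖ ^ α := by
    rcases le_or_gt 0 α with hα | hα
    · have h1 : T ^ (a * α) ≤ ‖phiMap n γi a x‖ ^ α := by
        rw [Real.rpow_mul hT0.le]
        exact Real.rpow_le_rpow (Real.rpow_nonneg hT0.le _)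
          (norm_phiMap_lower n γi a x hx0) hα
      calc min 1 ((n + 1 : ℝ) ^ (α / 2)) * T ^ (a * α)
          ≤ 1 * T ^ (a * α) :=
            mul_le_mul_of_nonneg_right (min_le_left _ _) (Real.rpow_nonneg hT0.le _)
        _ = T ^ (a * α) := one_mul _
        _ ≤ ‖phiMap n γi a x‖ ^ α := h1
    · have h2 : (Real.sqrt (n + 1) * T ^ a) ^ α ≤ ‖phiMap n γi a x‖ ^ α :=
        Real.rpow_le_rpow_of_nonpos hφpos
          (norm_phiMap_upper n γi hγi a ha x hx0 hx1 hxi) hα.le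
      have h3 : (Real.sqrt ((n : ℝ) + 1) * T ^ a) ^ α
          = (n + 1 : ℝ) ^ (α / 2) * T ^ (a * α) := by
        rw [Real.mul_rpow (Real.sqrt_nonneg _) (Real.rpow_nonneg hT0.le _),
          Real.sqrt_eq_rpow, ← Real.rpow_mul (by positivity : (0:ℝ) ≤ (n:ℝ) + 1),
          ← Real.rpow_mul hT0.le, show 1 / 2 * α = α / 2 by ring]
      calc min 1 ((n + 1 : ℝ) ^ (α / 2)) * T ^ (a * α)
          ≤ (n + 1 : ℝ) ^ (α / 2) * T ^ (a * α) :=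
            mul_le_mul_of_nonneg_right (min_le_right _ _) (Real.rpow_nonneg hT0.le _)
        _ = (Real.sqrt ((n : ℝ) + 1) * T ^ a) ^ α := h3.symm
        _ ≤ ‖phiMap n γi a x‖ ^ α := h2
  have hDenPos : 0 < a * T ^ (a * γ - (n + 1 : ℝ)) * ‖phiMap n γi a x‖ ^ α :=
    mul_pos (mul_pos ha (Real.rpow_pos_of_pos hT0 _)) (Real.rpow_pos_of_pos hφpos _)
  have hDenLowPos : 0 < a * min 1 ((n + 1 : ℝ) ^ (α / 2)) * T ^ (a * γ - (n + 1 : ℝ) + a * α) :=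
    mul_pos (mul_pos ha hca) (Real.rpow_pos_of_pos hT0 _)
  have hDenLow : a * min 1 ((n + 1 : ℝ) ^ (α / 2)) * T ^ (a * γ - (n + 1 : ℝ) + a * α)
      ≤ a * T ^ (a * γ - (n + 1 : ℝ)) * ‖phiMap n γi a x‖ ^ α := by
    have heq : a * min 1 ((n + 1 : ℝ) ^ (α / 2)) * T ^ (a * γ - (n + 1 : ℝ) + a * α)
        = a * T ^ (a * γ - (n + 1 : ℝ)) * (min 1 ((n + 1 : ℝ) ^ (α / 2)) * T ^ (a * α)) := by
      rw [Real.rpow_add hT0]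
      ring
    rw [heq]
    exact mul_le_mul_of_nonneg_left hφα
      (mul_nonneg ha.le (Real.rpow_nonneg hT0.le _))
  -- ratio bound
  have hratio : ‖fderiv ℝ (phiMap n γi a) x‖ ^ p /
      (a * T ^ (a * γ - (n + 1 : ℝ)) * ‖phiMap n γi a x‖ ^ α)
      ≤ (((∑ i, (a * γi i - 1) ^ 2) + n + a ^ 2) ^ (p / 2) /
          (a * min 1 ((n + 1 : ℝ) ^ (α / 2))))
        * T ^ ((a - 1) * p - (a * γ - (n + 1 : ℝ) + a * α)) := by
    have h1 : ‖fderiv ℝ (phiMap n γi a) x‖ ^ p /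
        (a * T ^ (a * γ - (n + 1 : ℝ)) * ‖phiMap n γi a x‖ ^ α)
        ≤ (((∑ i, (a * γi i - 1) ^ 2) + n + a ^ 2) ^ (p / 2) * T ^ ((a - 1) * p)) /
          (a * min 1 ((n + 1 : ℝ) ^ (α / 2)) * T ^ (a * γ - (n + 1 : ℝ) + a * α)) :=
      div_le_div₀ (by positivity) hnum hDenLowPos hDenLow
    have h2 : (((∑ i, (a * γi i - 1) ^ 2) + n + a ^ 2) ^ (p / 2) * T ^ ((a - 1) * p)) /
        (a * min 1 ((n + 1 : ℝ) ^ (α / 2)) * T ^ (a * γ - (n + 1 : ℝ) + a * α))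
        = (((∑ i, (a * γi i - 1) ^ 2) + n + a ^ 2) ^ (p / 2) /
            (a * min 1 ((n + 1 : ℝ) ^ (α / 2))))
          * T ^ ((a - 1) * p - (a * γ - (n + 1 : ℝ) + a * α)) := by
      rw [Real.rpow_sub hT0]
      have hTm : T ^ (a * γ - (n + 1 : ℝ) + a * α) ≠ 0 := (Real.rpow_pos_of_pos hT0 _).ne'
      field_simp
    exact h1.trans_eq h2
  -- raise to the power q
  have hbase0 : 0 ≤ ‖fderiv ℝ (phiMap n γi a) x‖ ^ p /
      (a * T ^ (a * γ - (n + 1 : ℝ)) * ‖phiMap n γi a x‖ ^ α) :=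
    div_nonneg (Real.rpow_nonneg (norm_nonneg _) _) hDenPos.le
  calc (‖fderiv ℝ (phiMap n γi a) x‖ ^ p /
      (a * T ^ (a * γ - (n + 1 : ℝ)) * ‖phiMap n γi a x‖ ^ α)) ^ q
      ≤ ((((∑ i, (a * γi i - 1) ^ 2) + n + a ^ 2) ^ (p / 2) /
            (a * min 1 ((n + 1 : ℝ) ^ (α / 2))))
          * T ^ ((a - 1) * p - (a * γ - (n + 1 : ℝ) + a * α))) ^ q :=
        Real.rpow_le_rpow hbase0 hratio hq
    _ = (((∑ i, (a * γi i - 1) ^ 2) + n + a ^ 2) ^ (p / 2) /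
            (a * min 1 ((n + 1 : ℝ) ^ (α / 2)))) ^ q
          * T ^ (((a - 1) * p - (a * γ - (n + 1 : ℝ) + a * α)) * q) := by
        rw [Real.mul_rpow (by positivity) (Real.rpow_nonneg hT0.le _),
          Real.rpow_mul hT0.le]

theorem measurable_last_coord (n : ℕ) :
    Measurable (fun x : EuclideanSpace ℝ (Fin (n + 1)) => x (Fin.last n)) :=
  (EuclideanSpace.proj (𝕜 := ℝ) (Fin.last n)).continuous.measurable

theorem measurableSet_omegaModel (n : ℕ) : MeasurableSet (OmegaModel n) := by
  have hmeas : ∀ j : Fin (n + 1),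
      Measurable (fun x : EuclideanSpace ℝ (Fin (n + 1)) => x j) := fun j =>
    (EuclideanSpace.proj (𝕜 := ℝ) j).continuous.measurable
  have : OmegaModel n = ({x : EuclideanSpace ℝ (Fin (n + 1)) | 0 < x (Fin.last n)} ∩
      {x | x (Fin.last n) < 1}) ∩
      ⋂ i : Fin n, ({x : EuclideanSpace ℝ (Fin (n + 1)) | 0 < x i.castSucc} ∩
        {x | x i.castSucc < x (Fin.last n)}) := by
    ext x
    simp only [OmegaModel, Set.mem_setOf_eq, Set.mem_inter_iff, Set.mem_iInter, forall_and]
    tauto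
  rw [this]
  refine MeasurableSet.inter (MeasurableSet.inter ?_ ?_)
    (MeasurableSet.iInter fun i => .inter ?_ ?_)
  · exact measurableSet_lt measurable_const (hmeas _)
  · exact measurableSet_lt (hmeas _) measurable_const
  · exact measurableSet_lt measurable_const (hmeas _)
  · exact measurableSet_lt (hmeas _) (hmeas _)

/-- Under `-(n+1) < α < (n+1)(p-1)`, `1 < p < α + γ`,
`max{0, (n+1-p)/(α+γ-p)} < a < p·n/(α+γ-p)`, if in addition
`1 < s < n·p/(a(α+γ-p)+p+1)` (the paper's `(n-1)p` in dimension `n`), then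
`∫_{Ω_n} ( ‖Dφ_a(x)‖^p / (a·x_last^{aγ-(n+1)} · ‖φ_a(x)‖^α) )^{s/(p-s)} dx ≤
( (Σ_i (aγ_i-1)^2 + n + a^2)^{p/2} / (a·c_a) )^{s/(p-s)}`,
where `c_a = min{1, (n+1)^{α/2}}`. (Paper dimension `n` is Lean `n + 1`.) -/
theorem statement6 (n : ℕ) (hn : 1 ≤ n) (γi : Fin n → ℝ) (hγi : ∀ i, 1 ≤ γi i)
    (γ : ℝ) (hγ : γ = 1 + ∑ i, γi i)
    (α p a s : ℝ)
    (hα₁ : -(n + 1 : ℝ) < α) (hα₂ : α < (n + 1) * (p - 1))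
    (hp₁ : 1 < p) (hp₂ : p < α + γ)
    (ha₁ : max 0 ((n + 1 - p) / (α + γ - p)) < a)
    (ha₂ : a < p * n / (α + γ - p))
    (hs₁ : 1 < s) (hs₂ : s < n * p / (a * (α + γ - p) + p + 1)) :
    ∫ x in OmegaModel n,
      (‖fderiv ℝ (phiMap n γi a) x‖ ^ p /
        (a * x (Fin.last n) ^ (a * γ - (n + 1 : ℝ)) * ‖phiMap n γi a x‖ ^ α))
        ^ (s / (p - s)) ≤
      (((∑ i, (a * γi i - 1) ^ 2) + n + a ^ 2) ^ (p / 2) /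
          (a * min 1 ((n + 1 : ℝ) ^ (α / 2)))) ^ (s / (p - s)) := by
  -- basic arithmetic consequences of the hypotheses
  have ha0 : 0 < a := lt_of_le_of_lt (le_max_left _ _) ha₁
  have hagp : 0 < α + γ - p := by linarith
  have hfrac : ((n : ℝ) + 1 - p) / (α + γ - p) < a := lt_of_le_of_lt (le_max_right _ _) ha₁
  have hβ : (n : ℝ) + 1 - p < a * (α + γ - p) := by
    rw [div_lt_iff₀ hagp] at hfrac; linarith
  have hden : 0 < a * (α + γ - p) + p + 1 := by nlinarith [mul_pos ha0 hagp]
  have hsp : s * (a * (α + γ - p) + p + 1) < n * p := by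
    rw [lt_div_iff₀ hden] at hs₂; exact hs₂
  have hs0 : 0 < s := lt_trans one_pos hs₁
  have hps : 0 < p - s := by nlinarith
  have hq0 : 0 < s / (p - s) := div_pos hs0 hps
  have hrn : 0 ≤ ((a - 1) * p - (a * γ - (n + 1 : ℝ) + a * α)) * (s / (p - s)) + n := by
    have h0 : 0 ≤ ((a - 1) * p - (a * γ - (n + 1 : ℝ) + a * α)) * s + n * (p - s) := by
      nlinarith
    have heq : ((a - 1) * p - (a * γ - (n + 1 : ℝ) + a * α)) * (s / (p - s)) + n
        = (((a - 1) * p - (a * γ - (n + 1 : ℝ) + a * α)) * s + n * (p - s)) / (p - s) := by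
      field_simp
    rw [heq]
    positivity
  have hsum0 : (0:ℝ) ≤ ∑ i, (a * γi i - 1) ^ 2 := Finset.sum_nonneg fun i _ => sq_nonneg _
  have hca : (0:ℝ) < min 1 ((n + 1 : ℝ) ^ (α / 2)) :=
    lt_min one_pos (Real.rpow_pos_of_pos (by positivity) _)
  have hK : (0:ℝ) ≤ (((∑ i, (a * γi i - 1) ^ 2) + n + a ^ 2) ^ (p / 2) /
      (a * min 1 ((n + 1 : ℝ) ^ (α / 2)))) ^ (s / (p - s)) :=
    Real.rpow_nonneg (by positivity) _
  have hΩ : MeasurableSet (OmegaModel n) := measurableSet_omegaModel n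
  set K := (((∑ i, (a * γi i - 1) ^ 2) + n + a ^ 2) ^ (p / 2) /
      (a * min 1 ((n + 1 : ℝ) ^ (α / 2)))) ^ (s / (p - s)) with hK_def
  set r := ((a - 1) * p - (a * γ - (n + 1 : ℝ) + a * α)) * (s / (p - s)) with hr_def
  -- the dominating function
  set G := fun x : EuclideanSpace ℝ (Fin (n + 1)) => K * x (Fin.last n) ^ r with hG_def
  have hGmeas : Measurable G :=
    ((measurable_last_coord n).pow measurable_const).const_mul K
  have hGnonneg : 0 ≤ᵐ[volume.restrict (OmegaModel n)] G :=
    (ae_restrict_iff' hΩ).2 (ae_of_all _ fun x hx =>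
      mul_nonneg hK (Real.rpow_nonneg hx.1.le _))
  have hGlint : ∫⁻ x in OmegaModel n, ENNReal.ofReal (G x) ≤ ENNReal.ofReal K := by
    have hG1 : ∀ x : EuclideanSpace ℝ (Fin (n + 1)),
        ENNReal.ofReal (G x) = ENNReal.ofReal K * ENNReal.ofReal (x (Fin.last n) ^ r) := by
      intro x
      rw [hG_def, ENNReal.ofReal_mul hK]
    calc ∫⁻ x in OmegaModel n, ENNReal.ofReal (G x)
        = ∫⁻ x in OmegaModel n,
            ENNReal.ofReal K * ENNReal.ofReal (x (Fin.last n) ^ r) := by simp_rw [hG1]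
      _ = ENNReal.ofReal K * ∫⁻ x in OmegaModel n, ENNReal.ofReal (x (Fin.last n) ^ r) :=
          lintegral_const_mul' _ _ ENNReal.ofReal_ne_top
      _ ≤ ENNReal.ofReal K * 1 :=
          mul_le_mul_right (omega_lintegral_le n r hrn) _
      _ = ENNReal.ofReal K := mul_one _
  have hGint : Integrable G (volume.restrict (OmegaModel n)) := by
    refine ⟨hGmeas.aestronglyMeasurable, ?_⟩
    rw [hasFiniteIntegral_iff_ofReal hGnonneg]
    exact lt_of_le_of_lt hGlint ENNReal.ofReal_lt_top
  have hFnonneg : 0 ≤ᵐ[volume.restrict (OmegaModel n)]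
      fun x : EuclideanSpace ℝ (Fin (n + 1)) =>
        (‖fderiv ℝ (phiMap n γi a) x‖ ^ p /
          (a * x (Fin.last n) ^ (a * γ - (n + 1 : ℝ)) * ‖phiMap n γi a x‖ ^ α))
          ^ (s / (p - s)) := by
    refine (ae_restrict_iff' hΩ).2 (ae_of_all _ fun x hx => ?_)
    have hT0 : 0 < x (Fin.last n) := hx.1
    refine Real.rpow_nonneg (div_nonneg (Real.rpow_nonneg (norm_nonneg _) _) ?_) _
    exact mul_nonneg (mul_nonneg ha0.le (Real.rpow_pos_of_pos hT0 _).le)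
      (Real.rpow_nonneg (norm_nonneg _) _)
  have hFG : (fun x : EuclideanSpace ℝ (Fin (n + 1)) =>
        (‖fderiv ℝ (phiMap n γi a) x‖ ^ p /
          (a * x (Fin.last n) ^ (a * γ - (n + 1 : ℝ)) * ‖phiMap n γi a x‖ ^ α))
          ^ (s / (p - s)))
      ≤ᵐ[volume.restrict (OmegaModel n)] G := by
    refine (ae_restrict_iff' hΩ).2 (ae_of_all _ fun x hx => ?_)
    exact pointwise_bound n γi hγi γ α p a (s / (p - s)) ha0 (by linarith) hq0.le x hx
  calc ∫ x in OmegaModel n,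
      (‖fderiv ℝ (phiMap n γi a) x‖ ^ p /
        (a * x (Fin.last n) ^ (a * γ - (n + 1 : ℝ)) * ‖phiMap n γi a x‖ ^ α))
        ^ (s / (p - s))
      ≤ ∫ x in OmegaModel n, G x := integral_mono_of_nonneg hFnonneg hGint hFG
    _ = (∫⁻ x in OmegaModel n, ENNReal.ofReal (G x)).toReal :=
        integral_eq_lintegral_of_nonneg_ae hGnonneg hGmeas.aestronglyMeasurable
    _ ≤ K := ENNReal.toReal_le_of_le_ofReal hK hGlint
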